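/- Let V ∈ ℍ^{d×n} be a quaternionic matrix with columns v_1, …, v_n, and set S := V·Vᴴ (frame operator) and G := Vᴴ·V (Gramian). Then trace(S^k) = trace(G^k) for every k ≥ 1; in particular trace(S) = ∑_j ‖v_j‖² and trace(S²) = ∑_j ∑_k |⟨v_j, v_k⟩|². -/

import Mathlib

open Quaternion Matrix BigOperators

noncomputable def qip {d : ℕ} (v w : Fin d → ℍ[ℝ]) : ℍ[ℝ] :=
  ∑ i, star (w i) * v i

noncomputable def nsq {d : ℕ} (v : Fin d → ℍ[ℝ]) : ℝ :=
  ∑ i, Quaternion.normSq (v i)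

lemma sum_re {α : Type*} (s : Finset α) (f : α → ℍ[ℝ]) :
    (∑ i ∈ s, f i).re = ∑ i ∈ s, (f i).re :=
  map_sum (QuaternionAlgebra.reₗ (R := ℝ) (c₁ := -1) (c₂ := 0) (c₃ := -1)) f s

lemma coe_sum' {α : Type*} (s : Finset α) (f : α → ℝ) :
    ((∑ i ∈ s, f i : ℝ) : ℍ[ℝ]) = ∑ i ∈ s, ((f i : ℝ) : ℍ[ℝ]) :=
  map_sum (algebraMap ℝ ℍ[ℝ]) f s

lemma re_mul_comm (p q : ℍ[ℝ]) : (p * q).re = (q * p).re := by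
  simp [Quaternion.re_mul]; ring

lemma re_trace_mul_comm {m n : ℕ} (A : Matrix (Fin m) (Fin n) ℍ[ℝ])
    (B : Matrix (Fin n) (Fin m) ℍ[ℝ]) : (A * B).trace.re = (B * A).trace.re := by
  simp only [Matrix.trace, Matrix.diag, Matrix.mul_apply, sum_re]
  rw [Finset.sum_comm]
  exact Finset.sum_congr rfl fun j _ => Finset.sum_congr rfl fun i _ => re_mul_comm _ _

lemma eq_coe_re_of_star_eq {q : ℍ[ℝ]} (h : star q = q) : q = (q.re : ℍ[ℝ]) := by
  have h1 := congrArg QuaternionAlgebra.imI h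
  have h2 := congrArg QuaternionAlgebra.imJ h
  have h3 := congrArg QuaternionAlgebra.imK h
  simp at h1 h2 h3
  ext <;> simp <;> linarith

lemma pow_expand {d n : ℕ} (V : Matrix (Fin d) (Fin n) ℍ[ℝ]) (m : ℕ) :
    (V * Vᴴ) ^ (m + 1) = V * (Vᴴ * V) ^ m * Vᴴ := by
  induction m with
  | zero => simp
  | succ m ih => rw [pow_succ, ih, pow_succ]; simp [Matrix.mul_assoc]

theorem trace_frame_operator_eq_trace_gramian (d n : ℕ)
    (V : Matrix (Fin d) (Fin n) ℍ[ℝ]) :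
    (∀ k : ℕ, 1 ≤ k → ((V * Vᴴ) ^ k).trace = ((Vᴴ * V) ^ k).trace) ∧
    (V * Vᴴ).trace = ((∑ j, nsq (fun i => V i j) : ℝ) : ℍ[ℝ]) ∧
    ((V * Vᴴ) ^ 2).trace =
      ((∑ j, ∑ k, Quaternion.normSq (qip (fun i => V i j) (fun i => V i k)) : ℝ) : ℍ[ℝ]) := by
  have hG : (Vᴴ * V).IsHermitian := isHermitian_conjTranspose_mul_self V
  have hS : (V * Vᴴ).IsHermitian := isHermitian_mul_conjTranspose_self V
  have htraceReal : ∀ {m : ℕ} (M : Matrix (Fin m) (Fin m) ℍ[ℝ]), M.IsHermitian →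
      M.trace = (M.trace.re : ℍ[ℝ]) := by
    intro m M hM
    apply eq_coe_re_of_star_eq
    rw [← Matrix.trace_conjTranspose, hM.eq]
  have key : ∀ k : ℕ, 1 ≤ k → ((V * Vᴴ) ^ k).trace = ((Vᴴ * V) ^ k).trace := by
    intro k hk
    obtain ⟨m, rfl⟩ := Nat.exists_eq_add_of_le' hk
    rw [htraceReal _ (hS.pow _), htraceReal _ (hG.pow _)]
    congr 1
    rw [pow_expand, Matrix.mul_assoc, re_trace_mul_comm, Matrix.mul_assoc, ← pow_succ]
  refine ⟨key, ?_, ?_⟩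
  · have h1 : (V * Vᴴ).trace = ((Vᴴ * V)).trace := by
      have := key 1 le_rfl; simpa using this
    rw [h1]
    simp only [Matrix.trace, Matrix.diag, Matrix.mul_apply, nsq,
      Matrix.conjTranspose_apply, Quaternion.star_mul_self]
    rw [coe_sum']
    exact Finset.sum_congr rfl fun j _ => (coe_sum' _ _).symm
  · rw [key 2 one_le_two]
    have hGsym : ∀ j k, (Vᴴ * V) j k = star ((Vᴴ * V) k j) := by
      intro j k
      rw [← Matrix.conjTranspose_apply, hG.eq]
    have hqip : ∀ j k, qip (fun i => V i j) (fun i => V i k) = (Vᴴ * V) k j := by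
      intro j k
      simp [qip, Matrix.mul_apply, Matrix.conjTranspose_apply]
    calc ((Vᴴ * V) ^ 2).trace
        = ∑ j, ∑ k, (Vᴴ * V) j k * (Vᴴ * V) k j := by
          simp [pow_two, Matrix.trace, Matrix.diag, Matrix.mul_apply]
      _ = ∑ j, ∑ k, ((Quaternion.normSq ((Vᴴ * V) k j) : ℝ) : ℍ[ℝ]) := by
          refine Finset.sum_congr rfl fun j _ => Finset.sum_congr rfl fun k _ => ?_
          rw [hGsym j k, Quaternion.star_mul_self]
      _ = ((∑ j, ∑ k, Quaternion.normSq (qip (fun i => V i j) (fun i => V i k)) : ℝ) : ℍ[ℝ]) := by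
          simp only [hqip]
          rw [coe_sum']
          exact Finset.sum_congr rfl fun j _ => (coe_sum' _ _).symm
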